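/- Let φ ∈ (0, 1/2) and let f* : [−π, π] → ℝ be a positive, even, continuous function which is twice differentiable on [−π,0) ∪ (0,π] and satisfies |(f*)''(ω)| ≤ C|ω|^{−2} for ω ≠ 0. Define f(ω) = |1 − e^{√(−1)ω}|^{−2φ} f*(ω). Then there exists a constant C' > 0 such that for all ω ∈ [−π,π] \ {0}: |(f*)'(ω)| ≤ C'|ω|^{−1}, |f*(ω)| ≤ C', |f'(ω)| ≤ C'|ω|^{−(2φ+1)}, and |f''(ω)| ≤ C'|ω|^{−(2φ+2)}. -/

import Mathlib

/-! Auxiliary material for `stmt_8`. -/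

/-- If `g` has bounded values and its first derivative `g1` has derivative `g2` with
`|g2 t| ≤ C / t²` on `(0, π]`, then `|g1 t| ≤ (4M + 4C)/t` there. -/
lemma aux_d1_bound {g g1 g2 : ℝ → ℝ} {M C : ℝ}
    (hg : ∀ t ∈ Set.Ioc 0 Real.pi, |g t| ≤ M)
    (hg1 : ∀ t ∈ Set.Ioc 0 Real.pi, HasDerivWithinAt g (g1 t) (Set.Ioc 0 Real.pi) t)
    (hg2 : ∀ t ∈ Set.Ioc 0 Real.pi, HasDerivWithinAt g1 (g2 t) (Set.Ioc 0 Real.pi) t)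
    (hb : ∀ t ∈ Set.Ioc 0 Real.pi, |g2 t| ≤ C / t ^ 2) :
    ∀ t ∈ Set.Ioc 0 Real.pi, |g1 t| ≤ (4 * M + 4 * C) / t := by
  intro t ht
  obtain ⟨ht0, htπ⟩ := ht
  have hC : 0 ≤ C := by
    by_contra h
    have h2 := div_neg_of_neg_of_pos (lt_of_not_ge h) (by positivity : (0:ℝ) < t^2)
    linarith [abs_nonneg (g2 t), hb t ⟨ht0, htπ⟩]
  have hsub : Set.Icc (t/2) t ⊆ Set.Ioc 0 Real.pi := fun x hx =>
    ⟨lt_of_lt_of_le (by linarith) hx.1, le_trans hx.2 htπ⟩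
  have hlt : t / 2 < t := by linarith
  have hcontg : ContinuousOn g (Set.Icc (t/2) t) := fun x hx =>
    ((hg1 x (hsub hx)).continuousWithinAt).mono hsub
  have hDA : ∀ x ∈ Set.Ioo (t/2) t, HasDerivAt g (g1 x) x := by
    intro x hx
    have hx' : x ∈ Set.Ioo 0 Real.pi := ⟨lt_trans (by linarith) hx.1, lt_of_lt_of_le hx.2 htπ⟩
    exact (hg1 x (Set.Ioo_subset_Ioc_self hx')).hasDerivAt
      (Filter.mem_of_superset (isOpen_Ioo.mem_nhds hx') Set.Ioo_subset_Ioc_self)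
  obtain ⟨ξ, hξmem, hξ⟩ := exists_hasDerivAt_eq_slope g g1 hlt hcontg hDA
  have hξS : ξ ∈ Set.Icc (t/2) t := ⟨hξmem.1.le, hξmem.2.le⟩
  have hMnn : 0 ≤ M := le_trans (abs_nonneg _) (hg t ⟨ht0, htπ⟩)
  have e3 : |g1 ξ| ≤ 4 * M / t := by
    rw [hξ, abs_div, abs_of_pos (by linarith : (0:ℝ) < t - t/2)]
    have h1 : |g t - g (t/2)| ≤ 2 * M := by
      have := hg t ⟨ht0, htπ⟩
      have := hg (t/2) (hsub ⟨le_refl _, hlt.le⟩)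
      have := abs_sub (g t) (g (t/2))
      linarith
    rw [div_le_div_iff₀ (by linarith) ht0]
    have : t - t/2 = t/2 := by ring
    nlinarith
  have hseg : ∀ x ∈ Set.Icc (t/2) t, ‖g1 x - g1 (t/2)‖ ≤ (4*C/t^2) * (x - t/2) := by
    apply norm_image_sub_le_of_norm_deriv_le_segment'
      (fun x hx => (hg2 x (hsub hx)).mono hsub)
    intro x hx
    have hx0 : 0 < x := lt_of_lt_of_le (by linarith) hx.1
    have h1 : |g2 x| ≤ C / x ^ 2 := hb x (hsub (Set.Ico_subset_Icc_self hx))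
    have h2 : C / x ^ 2 ≤ C / (t/2) ^ 2 := by
      apply div_le_div_of_nonneg_left hC (by positivity)
      nlinarith [hx.1]
    have h3 : C / (t/2)^2 = 4*C/t^2 := by
      field_simp; ring
    rw [Real.norm_eq_abs]
    linarith
  have e1 : |g1 t - g1 (t/2)| ≤ 2 * C / t := by
    have := hseg t ⟨hlt.le, le_refl _⟩
    rw [Real.norm_eq_abs] at this
    have h4 : (4*C/t^2) * (t - t/2) = 2*C/t := by field_simp; ring
    linarith [this, h4.le]
  have e2 : |g1 ξ - g1 (t/2)| ≤ 2 * C / t := by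
    have := hseg ξ hξS
    rw [Real.norm_eq_abs] at this
    have hle : (4*C/t^2) * (ξ - t/2) ≤ (4*C/t^2) * (t - t/2) := by
      apply mul_le_mul_of_nonneg_left (by linarith [hξS.2]) (by positivity)
    have h4 : (4*C/t^2) * (t - t/2) = 2*C/t := by field_simp; ring
    linarith
  have hsplit : g1 t = (g1 t - g1 (t/2)) - (g1 ξ - g1 (t/2)) + g1 ξ := by ring
  calc |g1 t| = |(g1 t - g1 (t/2)) - (g1 ξ - g1 (t/2)) + g1 ξ| := by rw [← hsplit]
    _ ≤ |(g1 t - g1 (t/2)) - (g1 ξ - g1 (t/2))| + |g1 ξ| := abs_add_le _ _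
    _ ≤ (|g1 t - g1 (t/2)| + |g1 ξ - g1 (t/2)|) + |g1 ξ| :=
        add_le_add (abs_sub _ _) le_rfl
    _ ≤ (2*C/t + 2*C/t) + 4*M/t := by linarith
    _ = (4 * M + 4 * C) / t := by field_simp; ring

/-- The spectral density of a long-memory process with memory parameter `φ`:
`f(ω) = |1 − e^{iω}|^{−2φ} f*(ω)`. -/
noncomputable def lmSpectral (φ : ℝ) (fstar : ℝ → ℝ) (ω : ℝ) : ℝ :=
  ‖1 - Complex.exp (Complex.I * (ω : ℂ))‖ ^ (-(2 * φ)) * fstar ω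

lemma lm_eq (φ : ℝ) (fstar : ℝ → ℝ) :
    lmSpectral φ fstar = fun ω => (2 - 2 * Real.cos ω) ^ (-φ) * fstar ω := by
  funext ω
  unfold lmSpectral
  congr 1
  have h1 : (1 - Complex.exp (Complex.I * ω)) =
      Complex.ofReal (1 - Real.cos ω) + Complex.ofReal (-Real.sin ω) * Complex.I := by
    rw [mul_comm, Complex.exp_mul_I, ← Complex.ofReal_cos, ← Complex.ofReal_sin]
    push_cast
    ring
  have habs : ‖1 - Complex.exp (Complex.I * ω)‖ = Real.sqrt (2 - 2 * Real.cos ω) := by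
    rw [h1, Complex.norm_add_mul_I]
    congr 1
    have := Real.sin_sq_add_cos_sq ω
    ring_nf
    nlinarith [this]
  rw [habs, Real.sqrt_eq_rpow,
    ← Real.rpow_mul (by nlinarith [Real.cos_le_one ω] : (0:ℝ) ≤ 2 - 2*Real.cos ω)]
  norm_num
  congr 1
  ring

noncomputable def auxP (φ : ℝ) (s : ℝ) : ℝ := (2 - 2*Real.cos s) ^ (-φ)
noncomputable def auxQ1 (φ : ℝ) (s : ℝ) : ℝ :=
  2*Real.sin s * (-φ) * (2 - 2*Real.cos s) ^ (-φ-1)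
noncomputable def auxQ2 (φ : ℝ) (s : ℝ) : ℝ :=
  2*Real.cos s * (-φ) * (2 - 2*Real.cos s) ^ (-φ-1)
  + 2*Real.sin s * (-φ) * (2*Real.sin s * (-φ-1) * (2 - 2*Real.cos s) ^ (-φ-1-1))

lemma hasDerivAt_base (ω : ℝ) : HasDerivAt (fun s => 2 - 2*Real.cos s) (2*Real.sin ω) ω := by
  have := ((Real.hasDerivAt_cos ω).const_mul 2).const_sub 2
  rw [show (2:ℝ) * Real.sin ω = -(2 * -Real.sin ω) by ring]
  exact this

lemma auxP_deriv (φ ω : ℝ) (hr : 2 - 2*Real.cos ω ≠ 0) :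
    HasDerivAt (auxP φ) (auxQ1 φ ω) ω := by
  have := (hasDerivAt_base ω).rpow_const (p := -φ) (Or.inl hr)
  unfold auxP auxQ1
  convert this using 1

lemma auxQ1_deriv (φ ω : ℝ) (hr : 2 - 2*Real.cos ω ≠ 0) :
    HasDerivAt (auxQ1 φ) (auxQ2 φ ω) ω := by
  have h1 : HasDerivAt (fun s => 2*Real.sin s * (-φ)) (2*Real.cos ω * (-φ)) ω :=
    ((Real.hasDerivAt_sin ω).const_mul 2).mul_const (-φ)
  have h2 := (hasDerivAt_base ω).rpow_const (p := -φ-1) (Or.inl hr)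
  have := h1.mul h2
  unfold auxQ1 auxQ2
  exact this

lemma two_sub_cos_lower {ω : ℝ} (hπ : |ω| ≤ Real.pi) :
    4/Real.pi^2 * |ω|^2 ≤ 2 - 2*Real.cos ω := by
  have h := Real.cos_le_one_sub_mul_cos_sq hπ
  rw [sq_abs]
  have h2 : 2/Real.pi^2*ω^2 + 2/Real.pi^2*ω^2 = 4/Real.pi^2*ω^2 := by ring
  linarith

lemma rpow_base_bound {x r e : ℝ} (hx : 0 < x) (hrl : 4/Real.pi^2 * x^2 ≤ r) (he : e ≤ 0) :
    r ^ e ≤ (4/Real.pi^2) ^ e * x ^ (2*e) := by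
  have hπ := Real.pi_pos
  have h1 : (0:ℝ) < 4/Real.pi^2 * x^2 := by positivity
  calc r ^ e ≤ (4/Real.pi^2 * x^2) ^ e := Real.rpow_le_rpow_of_nonpos h1 hrl he
    _ = (4/Real.pi^2) ^ e * x ^ (2*e) := by
        rw [Real.mul_rpow (by positivity) (by positivity), ← Real.rpow_natCast x 2,
          ← Real.rpow_mul hx.le]
        norm_num

lemma abs_mul_le {a b A B : ℝ} (ha : |a| ≤ A) (hb : |b| ≤ B) : |a*b| ≤ A*B := by
  rw [abs_mul]
  exact mul_le_mul ha hb (abs_nonneg _) (le_trans (abs_nonneg _) ha)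

theorem stmt_8 (φ C : ℝ) (hφ1 : 0 < φ) (hφ2 : φ < 1 / 2) (hC : 0 < C)
    (fstar d1 d2 : ℝ → ℝ)
    (hpos : ∀ ω ∈ Set.Icc (-Real.pi) Real.pi, 0 < fstar ω)
    (heven : ∀ ω ∈ Set.Icc (-Real.pi) Real.pi, fstar (-ω) = fstar ω)
    (hcont : ContinuousOn fstar (Set.Icc (-Real.pi) Real.pi))
    (hd1 : ∀ ω ∈ Set.Icc (-Real.pi) Real.pi \ {0},
      HasDerivWithinAt fstar (d1 ω) (Set.Icc (-Real.pi) Real.pi \ {0}) ω)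
    (hd2 : ∀ ω ∈ Set.Icc (-Real.pi) Real.pi \ {0},
      HasDerivWithinAt d1 (d2 ω) (Set.Icc (-Real.pi) Real.pi \ {0}) ω)
    (hbd2 : ∀ ω ∈ Set.Icc (-Real.pi) Real.pi \ {0}, |d2 ω| ≤ C * |ω| ^ (-(2 : ℝ))) :
    ∃ C' > 0, ∃ fd1 fd2 : ℝ → ℝ,
      (∀ ω ∈ Set.Icc (-Real.pi) Real.pi \ {0},
        HasDerivWithinAt (lmSpectral φ fstar) (fd1 ω) (Set.Icc (-Real.pi) Real.pi \ {0}) ω) ∧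
      (∀ ω ∈ Set.Icc (-Real.pi) Real.pi \ {0},
        HasDerivWithinAt fd1 (fd2 ω) (Set.Icc (-Real.pi) Real.pi \ {0}) ω) ∧
      (∀ ω ∈ Set.Icc (-Real.pi) Real.pi \ {0},
        |d1 ω| ≤ C' * |ω| ^ (-(1 : ℝ)) ∧ |fstar ω| ≤ C' ∧
        |fd1 ω| ≤ C' * |ω| ^ (-(2 * φ + 1)) ∧ |fd2 ω| ≤ C' * |ω| ^ (-(2 * φ + 2))) := by
  have hπ := Real.pi_pos
  -- global bound on fstar
  obtain ⟨M0, hM0⟩ := (isCompact_Icc (a := -Real.pi) (b := Real.pi)).exists_bound_of_continuousOn hcont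
  set M : ℝ := max M0 1 with hMdef
  have hMpos : (0:ℝ) < M := lt_of_lt_of_le one_pos (le_max_right _ _)
  have hfsb : ∀ ω ∈ Set.Icc (-Real.pi) Real.pi, |fstar ω| ≤ M := fun ω hω =>
    le_trans (by rw [← Real.norm_eq_abs]; exact hM0 ω hω) (le_max_left _ _)
  -- subset facts
  have hIocS : Set.Ioc 0 Real.pi ⊆ Set.Icc (-Real.pi) Real.pi \ {0} := fun x hx =>
    ⟨⟨by linarith [hx.1], hx.2⟩, by simp only [Set.mem_singleton_iff]; exact (ne_of_gt hx.1)⟩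
  have hnegmaps : Set.MapsTo Neg.neg (Set.Ioc 0 Real.pi) (Set.Icc (-Real.pi) Real.pi \ {0}) := by
    intro x hx
    exact ⟨⟨by linarith [hx.2], by linarith [hx.1]⟩,
      by simp only [Set.mem_singleton_iff, neg_eq_zero]; exact (ne_of_gt hx.1)⟩
  have hrpowconv : ∀ t : ℝ, 0 < t → C * t ^ (-(2:ℝ)) = C / t^2 := by
    intro t ht
    rw [Real.rpow_neg ht.le, show (2:ℝ) = ((2:ℕ):ℝ) by norm_num, Real.rpow_natCast]
    ring
  -- d1 bound
  set C1 : ℝ := 4*M + 4*C with hC1def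
  have hC1pos : 0 < C1 := by rw [hC1def]; positivity
  have hd1bound : ∀ ω ∈ Set.Icc (-Real.pi) Real.pi \ {0}, |d1 ω| ≤ C1 / |ω| := by
    have hposside := aux_d1_bound (g := fstar) (g1 := d1) (g2 := d2) (M := M) (C := C)
      (fun t ht => hfsb t ⟨by linarith [ht.1], ht.2⟩)
      (fun t ht => (hd1 t (hIocS ht)).mono hIocS)
      (fun t ht => (hd2 t (hIocS ht)).mono hIocS)
      (fun t ht => by
        have h := hbd2 t (hIocS ht)
        rwa [abs_of_pos ht.1, hrpowconv t ht.1] at h)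
    have hnegside := aux_d1_bound (g := fun t => fstar (-t)) (g1 := fun t => d1 (-t) * (-1))
      (g2 := fun t => d2 (-t) * (-1) * (-1)) (M := M) (C := C)
      (fun t ht => hfsb (-t) (hnegmaps ht).1)
      (fun t ht => HasDerivWithinAt.comp t (hd1 (-t) (hnegmaps ht))
        ((hasDerivAt_neg t).hasDerivWithinAt) hnegmaps)
      (fun t ht => (HasDerivWithinAt.comp t (hd2 (-t) (hnegmaps ht))
        ((hasDerivAt_neg t).hasDerivWithinAt) hnegmaps).mul_const (-1))
      (fun t ht => by
        have h := hbd2 (-t) (hnegmaps ht)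
        rw [abs_neg, abs_of_pos ht.1, hrpowconv t ht.1] at h
        calc |d2 (-t) * (-1) * (-1)| = |d2 (-t)| := by rw [abs_mul, abs_mul]; simp
          _ ≤ C / t ^ 2 := h)
    intro ω hω
    obtain ⟨⟨hl, hr⟩, hne⟩ := hω
    have hne' : ω ≠ 0 := by simpa using hne
    rcases lt_or_gt_of_ne hne' with hlt | hgt
    · have ht : -ω ∈ Set.Ioc 0 Real.pi := ⟨by linarith, by linarith⟩
      have h2 := hnegside (-ω) ht
      simp only [neg_neg, mul_neg_one, abs_neg] at h2
      rw [abs_of_neg hlt, hC1def]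
      exact h2
    · have ht : ω ∈ Set.Ioc 0 Real.pi := ⟨hgt, hr⟩
      have := hposside ω ht
      rwa [abs_of_pos hgt]
  -- positivity of the trigonometric base on S
  have hrpos : ∀ ω ∈ Set.Icc (-Real.pi) Real.pi \ {0}, 0 < 2 - 2*Real.cos ω := by
    intro ω hω
    obtain ⟨⟨hl, hr⟩, hne⟩ := hω
    have hne' : ω ≠ 0 := by simpa using hne
    have habs : |ω| ≤ Real.pi := abs_le.mpr ⟨hl, hr⟩
    have h1 := two_sub_cos_lower habs
    have h2 : 0 < 4/Real.pi^2 * |ω|^2 := by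
      have : |ω| ≠ 0 := abs_ne_zero.mpr hne'
      positivity
    linarith
  -- constants
  set K0 : ℝ := (4/Real.pi^2) ^ (-φ) with hK0def
  set K1 : ℝ := (4/Real.pi^2) ^ (-φ-1) with hK1def
  set K2 : ℝ := (4/Real.pi^2) ^ (-φ-1-1) with hK2def
  have hK0pos : 0 < K0 := Real.rpow_pos_of_pos (by positivity) _
  have hK1pos : 0 < K1 := Real.rpow_pos_of_pos (by positivity) _
  have hK2pos : 0 < K2 := Real.rpow_pos_of_pos (by positivity) _
  set B1 : ℝ := 2*φ*K1 with hB1def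
  set B2 : ℝ := 2*φ*K1 + 4*φ*(φ+1)*K2 with hB2def
  have hB1pos : 0 < B1 := by rw [hB1def]; positivity
  have hB2pos : 0 < B2 := by rw [hB2def]; positivity
  set A1 : ℝ := B1*M + K0*C1 with hA1def
  set A2 : ℝ := B2*M + 2*(B1*C1) + K0*C with hA2def
  have hA1pos : 0 < A1 := by rw [hA1def]; positivity
  have hA2pos : 0 < A2 := by rw [hA2def]; positivity
  refine ⟨M + C1 + A1 + A2, by positivity,
    (fun ω => auxQ1 φ ω * fstar ω + auxP φ ω * d1 ω),
    (fun ω => (auxQ2 φ ω * fstar ω + auxQ1 φ ω * d1 ω)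
      + (auxQ1 φ ω * d1 ω + auxP φ ω * d2 ω)), ?_, ?_, ?_⟩
  · intro ω hω
    rw [lm_eq φ fstar]
    have h := ((auxP_deriv φ ω (hrpos ω hω).ne').hasDerivWithinAt).mul (hd1 ω hω)
    exact h
  · intro ω hω
    exact (((auxQ1_deriv φ ω (hrpos ω hω).ne').hasDerivWithinAt).mul (hd1 ω hω)).add
      (((auxP_deriv φ ω (hrpos ω hω).ne').hasDerivWithinAt).mul (hd2 ω hω))
  · intro ω hω
    obtain ⟨⟨hl, hr⟩, hne⟩ := hω
    have hne' : ω ≠ 0 := by simpa using hne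
    set x : ℝ := |ω| with hxdef
    have hx0 : 0 < x := abs_pos.mpr hne'
    have hxπ : x ≤ Real.pi := abs_le.mpr ⟨hl, hr⟩
    have hrl : 4/Real.pi^2 * x^2 ≤ 2 - 2*Real.cos ω := two_sub_cos_lower hxπ
    have hr0 : 0 < 2 - 2*Real.cos ω := hrpos ω ⟨⟨hl, hr⟩, hne⟩
    have hxadd : ∀ a b : ℝ, x ^ a * x ^ b = x ^ (a+b) := fun a b => (Real.rpow_add hx0 a b).symm
    have hx2 : x ^ (2:ℝ) = x * x := by
      rw [show (2:ℝ) = ((2:ℕ):ℝ) by norm_num, Real.rpow_natCast]; ring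
    have hsinb : |Real.sin ω| ≤ x := Real.abs_sin_le_abs
    have t1 : |2*Real.sin ω| ≤ 2*x := by
      rw [abs_mul, abs_two]; exact mul_le_mul_of_nonneg_left hsinb (by norm_num)
    have t2 : |(-φ)| ≤ φ := by rw [abs_neg, abs_of_pos hφ1]
    have t4 : |(-φ-1)| ≤ φ+1 := by
      rw [show (-φ-1:ℝ) = -(φ+1) by ring, abs_neg, abs_of_pos (by linarith)]
    have t6 : |2*Real.cos ω| ≤ 2 := by
      rw [abs_mul, abs_two]
      nlinarith [Real.abs_cos_le_one ω]
    have t3 : |(2 - 2*Real.cos ω) ^ (-φ-1)| ≤ K1 * x^(2*(-φ-1)) := by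
      rw [abs_of_nonneg (Real.rpow_nonneg hr0.le _), hK1def]
      exact rpow_base_bound hx0 hrl (by linarith)
    have t5 : |(2 - 2*Real.cos ω) ^ (-φ-1-1)| ≤ K2 * x^(2*(-φ-1-1)) := by
      rw [abs_of_nonneg (Real.rpow_nonneg hr0.le _), hK2def]
      exact rpow_base_bound hx0 hrl (by linarith)
    have hPb : |auxP φ ω| ≤ K0 * x ^ (-(2*φ)) := by
      unfold auxP
      rw [abs_of_nonneg (Real.rpow_nonneg hr0.le _), hK0def,
        show -(2*φ) = 2*(-φ) by ring]
      exact rpow_base_bound hx0 hrl (by linarith)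
    have hQ1b : |auxQ1 φ ω| ≤ B1 * x ^ (-(2*φ+1)) := by
      unfold auxQ1
      calc |2*Real.sin ω * (-φ) * (2 - 2*Real.cos ω) ^ (-φ-1)|
          ≤ (2*x*φ) * (K1 * x^(2*(-φ-1))) := abs_mul_le (abs_mul_le t1 t2) t3
        _ = (2*φ*K1) * (x^(1:ℝ) * x^(2*(-φ-1))) := by rw [Real.rpow_one]; ring
        _ = (2*φ*K1) * x^(1 + 2*(-φ-1)) := by rw [hxadd]
        _ = B1 * x^(-(2*φ+1)) := by
            rw [show (1:ℝ) + 2*(-φ-1) = -(2*φ+1) by ring, hB1def]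
    have hQ2b : |auxQ2 φ ω| ≤ B2 * x ^ (-(2*φ+2)) := by
      unfold auxQ2
      calc |2*Real.cos ω * (-φ) * (2 - 2*Real.cos ω) ^ (-φ-1)
            + 2*Real.sin ω * (-φ) * (2*Real.sin ω * (-φ-1) * (2 - 2*Real.cos ω) ^ (-φ-1-1))|
          ≤ |2*Real.cos ω * (-φ) * (2 - 2*Real.cos ω) ^ (-φ-1)|
            + |2*Real.sin ω * (-φ) * (2*Real.sin ω * (-φ-1) * (2 - 2*Real.cos ω) ^ (-φ-1-1))| :=
            abs_add_le _ _
        _ ≤ (2*φ) * (K1 * x^(2*(-φ-1)))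
            + (2*x*φ) * ((2*x*(φ+1)) * (K2 * x^(2*(-φ-1-1)))) :=
            add_le_add (abs_mul_le (abs_mul_le t6 t2) t3)
              (abs_mul_le (abs_mul_le t1 t2) (abs_mul_le (abs_mul_le t1 t4) t5))
        _ = (2*φ*K1) * x^(2*(-φ-1))
            + (4*φ*(φ+1)*K2) * (x^(2:ℝ) * x^(2*(-φ-1-1))) := by rw [hx2]; ring
        _ = (2*φ*K1) * x^(2*(-φ-1)) + (4*φ*(φ+1)*K2) * x^(2 + 2*(-φ-1-1)) := by rw [hxadd]
        _ = (2*φ*K1) * x^(-(2*φ+2)) + (4*φ*(φ+1)*K2) * x^(-(2*φ+2)) := by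
            rw [show 2*(-φ-1) = -(2*φ+2) by ring, show (2:ℝ) + 2*(-φ-1-1) = -(2*φ+2) by ring]
        _ = B2 * x^(-(2*φ+2)) := by rw [hB2def]; ring
    have hfsbx : |fstar ω| ≤ M := hfsb ω ⟨hl, hr⟩
    have hd1x : |d1 ω| ≤ C1 * x^(-(1:ℝ)) := by
      have h := hd1bound ω ⟨⟨hl, hr⟩, hne⟩
      rwa [show (-(1:ℝ)) = (-1:ℝ) by norm_num, Real.rpow_neg_one, ← div_eq_mul_inv]
    have hd2x : |d2 ω| ≤ C * x^(-(2:ℝ)) := hbd2 ω ⟨⟨hl, hr⟩, hne⟩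
    have hCsum : C1 ≤ M + C1 + A1 + A2 := by linarith
    refine ⟨?_, ?_, ?_, ?_⟩
    · exact le_trans hd1x (mul_le_mul_of_nonneg_right hCsum (Real.rpow_nonneg hx0.le _))
    · linarith [hfsbx]
    · calc |auxQ1 φ ω * fstar ω + auxP φ ω * d1 ω|
          ≤ |auxQ1 φ ω * fstar ω| + |auxP φ ω * d1 ω| := abs_add_le _ _
        _ ≤ (B1 * x^(-(2*φ+1))) * M + (K0 * x^(-(2*φ))) * (C1 * x^(-(1:ℝ))) :=
            add_le_add (abs_mul_le hQ1b hfsbx) (abs_mul_le hPb hd1x)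
        _ = B1*M * x^(-(2*φ+1)) + K0*C1 * (x^(-(2*φ)) * x^(-(1:ℝ))) := by ring
        _ = B1*M * x^(-(2*φ+1)) + K0*C1 * x^(-(2*φ) + -(1:ℝ)) := by rw [hxadd]
        _ = A1 * x^(-(2*φ+1)) := by
            rw [show -(2*φ) + -(1:ℝ) = -(2*φ+1) by ring, hA1def]; ring
        _ ≤ (M + C1 + A1 + A2) * x^(-(2*φ+1)) :=
            mul_le_mul_of_nonneg_right (by linarith) (Real.rpow_nonneg hx0.le _)
    · calc |auxQ2 φ ω * fstar ω + auxQ1 φ ω * d1 ω + (auxQ1 φ ω * d1 ω + auxP φ ω * d2 ω)|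
          ≤ |auxQ2 φ ω * fstar ω + auxQ1 φ ω * d1 ω| + |auxQ1 φ ω * d1 ω + auxP φ ω * d2 ω| :=
            abs_add_le _ _
        _ ≤ (|auxQ2 φ ω * fstar ω| + |auxQ1 φ ω * d1 ω|)
            + (|auxQ1 φ ω * d1 ω| + |auxP φ ω * d2 ω|) :=
            add_le_add (abs_add_le _ _) (abs_add_le _ _)
        _ ≤ ((B2 * x^(-(2*φ+2))) * M + (B1 * x^(-(2*φ+1))) * (C1 * x^(-(1:ℝ))))
            + ((B1 * x^(-(2*φ+1))) * (C1 * x^(-(1:ℝ))) + (K0 * x^(-(2*φ))) * (C * x^(-(2:ℝ)))) :=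
            add_le_add (add_le_add (abs_mul_le hQ2b hfsbx) (abs_mul_le hQ1b hd1x))
              (add_le_add (abs_mul_le hQ1b hd1x) (abs_mul_le hPb hd2x))
        _ = B2*M * x^(-(2*φ+2)) + 2*(B1*C1) * (x^(-(2*φ+1)) * x^(-(1:ℝ)))
            + K0*C * (x^(-(2*φ)) * x^(-(2:ℝ))) := by ring
        _ = B2*M * x^(-(2*φ+2)) + 2*(B1*C1) * x^(-(2*φ+1) + -(1:ℝ))
            + K0*C * x^(-(2*φ) + -(2:ℝ)) := by rw [hxadd, hxadd]
        _ = A2 * x^(-(2*φ+2)) := by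
            rw [show -(2*φ+1) + -(1:ℝ) = -(2*φ+2) by ring,
              show -(2*φ) + -(2:ℝ) = -(2*φ+2) by ring, hA2def]
            ring
        _ ≤ (M + C1 + A1 + A2) * x^(-(2*φ+2)) :=
            mul_le_mul_of_nonneg_right (by linarith) (Real.rpow_nonneg hx0.le _)
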